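/- Let G be a connected simple graph on a finite nonempty vertex set V of size n that is not bipartite (i.e., G is not 2-colorable). Then the unsigned incidence matrix L of G over ℝ has rank n; equivalently, the signless Laplacian P = LLᵀ = D + A is positive definite, where D is the diagonal degree matrix and A the adjacency matrix of G. -/

import Mathlib

open Matrix SimpleGraph

theorem incidence_rank_nonbipartite
    (V : Type) [Fintype V] [DecidableEq V] (n : ℕ) (hcard : Fintype.card V = n)
    (hne : Nonempty V) (G : SimpleGraph V) [DecidableRel G.Adj]
    (hconn : G.Connected) (hnb : ¬ G.Colorable 2) :
    (G.incMatrix ℝ).rank = n ∧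
    (Matrix.diagonal (fun v => (G.degree v : ℝ)) + G.adjMatrix ℝ).PosDef := by
  classical
  set L := G.incMatrix ℝ with hLdef
  have hprod : L * Lᵀ = Matrix.diagonal (fun v => (G.degree v : ℝ)) + G.adjMatrix ℝ := by
    rw [hLdef, G.incMatrix_mul_transpose]
    ext a b
    by_cases h : a = b
    · subst h; simp
    · simp [h, Matrix.diagonal_apply_ne _ h]
  -- kernel of Lᵀ is trivial
  have hker : ∀ x : V → ℝ, Lᵀ *ᵥ x = 0 → x = 0 := by
    intro x hx
    have hedge : ∀ u w, G.Adj u w → x u + x w = 0 := by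
      intro u w huw
      have h1 : (Lᵀ *ᵥ x) s(u, w) = 0 := by rw [hx]; rfl
      have h2 : (Lᵀ *ᵥ x) s(u, w)
          = ∑ v ∈ Finset.univ.filter (fun v => v = u ∨ v = w), x v := by
        rw [Finset.sum_filter]
        simp only [Matrix.mulVec, Matrix.transpose_apply, dotProduct, hLdef,
          G.incMatrix_apply', mk'_mem_incidenceSet_iff, huw, true_and, ite_mul, one_mul,
          zero_mul]
      have h3 : Finset.univ.filter (fun v => v = u ∨ v = w) = {u, w} := by
        ext v; simp
      rw [h2, h3, Finset.sum_pair (G.ne_of_adj huw)] at h1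
      exact h1
    by_contra hx0
    obtain ⟨v0, hv0⟩ := Function.ne_iff.mp hx0
    have step : ∀ {u w : V}, G.Adj u w → x u ≠ 0 → x w ≠ 0 := by
      intro u w huw hu hw
      apply hu
      have := hedge u w huw
      linarith
    have hall : ∀ ⦃u v : V⦄, G.Walk u v → x u ≠ 0 → x v ≠ 0 := by
      intro u v p
      induction p with
      | nil => exact id
      | cons h _ ih => exact fun hu => ih (step h hu)
    have hne0 : ∀ v, x v ≠ 0 := by
      intro v
      obtain ⟨p⟩ := hconn v0 v
      exact hall p hv0
    have C : G.Coloring (Fin 2) := by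
      refine Coloring.mk (fun v => if 0 < x v then 0 else 1) ?_
      intro u w huw heq
      have hsum := hedge u w huw
      by_cases hu : 0 < x u
      · have hw : ¬ 0 < x w := by linarith
        simp [hu, hw] at heq
      · have hu' : x u < 0 := lt_of_le_of_ne (not_lt.mp hu) (hne0 u)
        have hw : 0 < x w := by linarith
        simp [hu, hw] at heq
    exact hnb (by simpa using C.colorable)
  -- positive definiteness
  have hpsd : (L * Lᵀ).PosSemidef := by
    have := Matrix.posSemidef_self_mul_conjTranspose L
    rwa [L.conjTranspose_eq_transpose_of_trivial] at this
  have hpd : (L * Lᵀ).PosDef := by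
    refine posDef_iff_dotProduct_mulVec.mpr ⟨hpsd.1, fun x hx => lt_of_le_of_ne ?_ ?_⟩
    · simpa using hpsd.dotProduct_mulVec_nonneg x
    · intro h
      apply hx
      apply hker
      have : (Lᵀ *ᵥ x) ⬝ᵥ (Lᵀ *ᵥ x) = 0 := by
        rw [show star x = x from star_trivial x, ← Matrix.mulVec_mulVec,
          Matrix.dotProduct_mulVec, ← Matrix.mulVec_transpose] at h
        exact h.symm
      exact dotProduct_self_eq_zero.mp this
  constructor
  · have h1 : (L * Lᵀ).rank = L.rank := Matrix.rank_self_mul_transpose L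
    have h2 : (L * Lᵀ).rank = Fintype.card V :=
      Matrix.rank_of_isUnit _ hpd.isUnit
    rw [← h1, h2, hcard]
  · rwa [hprod] at hpd
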